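/- Let K ≥ 2, let V_1, …, V_K ∈ ℝ, and let ε_1, …, ε_K be independent random variables each distributed according to the standard Gumbel distribution. Then for every k ∈ {1, …, K}, the probability that V_k + ε_k > V_j + ε_j for all j ≠ k equals exp(V_k) / ∑_{j=1}^K exp(V_j), i.e., the choice probability takes the form of the softmax function. (Proposition 1.) -/

import Mathlib

open MeasureTheory ProbabilityTheory Real

/-- The standard Gumbel distribution: the probability measure on `ℝ` with density
`x ↦ exp (-x) * exp (-exp (-x))` with respect to Lebesgue measure (its CDF is
`x ↦ exp (-exp (-x))`). -/
noncomputable def stdGumbel : Measure ℝ :=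
  MeasureTheory.volume.withDensity
    (fun x => ENNReal.ofReal (Real.exp (-x) * Real.exp (-Real.exp (-x))))

section Helpers
open Filter Set

noncomputable def gumG (C x : ℝ) : ℝ := C⁻¹ * Real.exp (-(C * Real.exp (-x)))

lemma gumG_hasDerivAt {C : ℝ} (hC : C ≠ 0) (x : ℝ) :
    HasDerivAt (gumG C) (Real.exp (-x) * Real.exp (-(C * Real.exp (-x)))) x := by
  have h1 : HasDerivAt (fun x : ℝ => -(C * Real.exp (-x))) (C * Real.exp (-x)) x := by
    have := ((Real.hasDerivAt_exp (-x)).comp x (hasDerivAt_neg x)).const_mul C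
    exact this.neg.congr_deriv (by ring)
  have h2 := (Real.hasDerivAt_exp _).comp x h1
  have := h2.const_mul C⁻¹
  exact this.congr_deriv (by field_simp)

lemma gumG_tendsto_atTop {C : ℝ} (hC : 0 < C) :
    Tendsto (gumG C) atTop (nhds C⁻¹) := by
  have : Tendsto (fun x : ℝ => -(C * Real.exp (-x))) atTop (nhds 0) := by
    have := (Real.tendsto_exp_neg_atTop_nhds_zero).const_mul C
    simpa using this.neg
  have h := (Real.continuous_exp.tendsto 0).comp this
  exact (by simpa using h.const_mul C⁻¹ :
    Tendsto (fun x : ℝ => C⁻¹ * Real.exp (-(C * Real.exp (-x)))) atTop (nhds C⁻¹))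

lemma gumG_tendsto_atBot {C : ℝ} (hC : 0 < C) :
    Tendsto (gumG C) atBot (nhds 0) := by
  have h1 : Tendsto (fun x : ℝ => -(C * Real.exp (-x))) atBot atBot := by
    have : Tendsto (fun x : ℝ => Real.exp (-x)) atBot atTop :=
      Real.tendsto_exp_atTop.comp tendsto_neg_atBot_atTop
    exact tendsto_neg_atTop_atBot.comp (this.const_mul_atTop hC)
  have := Real.tendsto_exp_atBot.comp h1
  exact (by simpa using this.const_mul C⁻¹ :
    Tendsto (fun x : ℝ => C⁻¹ * Real.exp (-(C * Real.exp (-x)))) atBot (nhds 0))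

noncomputable def gumg (C x : ℝ) : ℝ := Real.exp (-x) * Real.exp (-(C * Real.exp (-x)))

lemma gumg_nonneg (C x : ℝ) : 0 ≤ gumg C x :=
  mul_nonneg (Real.exp_nonneg _) (Real.exp_nonneg _)

lemma gumg_continuous (C : ℝ) : Continuous (gumg C) := by
  unfold gumg
  fun_prop

lemma gumG_nonneg {C : ℝ} (hC : 0 < C) (x : ℝ) : 0 ≤ gumG C x :=
  mul_nonneg (by positivity) (Real.exp_nonneg _)

lemma gumG_le {C : ℝ} (hC : 0 < C) (x : ℝ) : gumG C x ≤ C⁻¹ := by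
  have : Real.exp (-(C * Real.exp (-x))) ≤ 1 := by
    apply Real.exp_le_one_iff.mpr
    have : 0 ≤ C * Real.exp (-x) := by positivity
    linarith
  calc gumG C x ≤ C⁻¹ * 1 := by
        unfold gumG
        exact mul_le_mul_of_nonneg_left this (by positivity)
    _ = C⁻¹ := mul_one _

lemma gumg_intervalIntegral {C : ℝ} (hC : 0 < C) (a b : ℝ) (hab : a ≤ b) :
    ∫ x in a..b, gumg C x = gumG C b - gumG C a := by
  apply intervalIntegral.integral_eq_sub_of_hasDerivAt
  · intro x _; exact gumG_hasDerivAt hC.ne' x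
  · exact ((gumg_continuous C).intervalIntegrable a b)

lemma gumg_integrableOn_Iic {C : ℝ} (hC : 0 < C) (b : ℝ) :
    IntegrableOn (gumg C) (Iic b) := by
  apply integrableOn_Iic_of_intervalIntegral_norm_bounded (μ := volume)
    (f := gumg C) (l := atBot) (a := id) C⁻¹ b
  · intro i; exact ((gumg_continuous C).integrableOn_Ioc)
  · exact tendsto_id
  · filter_upwards [eventually_le_atBot b] with i hi
    have : ∫ x in (id i)..b, ‖gumg C x‖ = ∫ x in i..b, gumg C x := by
      simp only [id]
      apply intervalIntegral.integral_congr
      intro x _; exact Real.norm_of_nonneg (gumg_nonneg C x)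
    rw [this, gumg_intervalIntegral hC i b hi]
    have := gumG_nonneg hC i
    have := gumG_le hC b
    linarith

lemma gumg_integrable {C : ℝ} (hC : 0 < C) : Integrable (gumg C) := by
  have h1 := gumg_integrableOn_Iic hC 0
  have h2 : IntegrableOn (gumg C) (Ioi 0) := by
    apply integrableOn_Ioi_deriv_of_nonneg (g := gumG C)
      ((gumG_hasDerivAt hC.ne' 0).continuousAt.continuousWithinAt)
      (fun x _ => gumG_hasDerivAt hC.ne' x)
      (fun x _ => gumg_nonneg C x) (gumG_tendsto_atTop hC)
  have : IntegrableOn (gumg C) (Iic 0 ∪ Ioi 0) := h1.union h2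
  rwa [Iic_union_Ioi, integrableOn_univ] at this

lemma gumg_integral_Iic {C : ℝ} (hC : 0 < C) (b : ℝ) :
    ∫ x in Iic b, gumg C x = gumG C b := by
  have := integral_Iic_of_hasDerivAt_of_tendsto' (f := gumG C) (f' := gumg C) (a := b)
    (fun x _ => gumG_hasDerivAt hC.ne' x) (gumg_integrableOn_Iic hC b) (gumG_tendsto_atBot hC)
  simpa using this

lemma gumg_integral {C : ℝ} (hC : 0 < C) : ∫ x, gumg C x = C⁻¹ := by
  have := integral_of_hasDerivAt_of_tendsto (f := gumG C) (f' := gumg C)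
    (fun x => gumG_hasDerivAt hC.ne' x) (gumg_integrable hC)
    (gumG_tendsto_atBot hC) (gumG_tendsto_atTop hC)
  simpa using this

lemma stdGumbel_density_eq : (fun x => Real.exp (-x) * Real.exp (-Real.exp (-x))) = gumg 1 := by
  funext x; unfold gumg; rw [one_mul]

lemma stdGumbel_apply {s : Set ℝ} (hs : MeasurableSet s) :
    stdGumbel s = ∫⁻ x in s, ENNReal.ofReal (gumg 1 x) := by
  rw [stdGumbel, withDensity_apply _ hs]
  congr 1
  funext x; rw [show Real.exp (-x) * Real.exp (-Real.exp (-x)) = gumg 1 x by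
    unfold gumg; rw [one_mul]]

lemma lintegral_ofReal_eq {s : Set ℝ} (hs : MeasurableSet s) {f : ℝ → ℝ}
    (hf : IntegrableOn f s) (hpos : ∀ x, 0 ≤ f x) :
    ∫⁻ x in s, ENNReal.ofReal (f x) = ENNReal.ofReal (∫ x in s, f x) := by
  rw [← ofReal_integral_eq_lintegral_ofReal hf (Filter.Eventually.of_forall hpos)]

lemma stdGumbel_Iic (a : ℝ) : stdGumbel (Iic a) = ENNReal.ofReal (Real.exp (-Real.exp (-a))) := by
  rw [stdGumbel_apply measurableSet_Iic,
    lintegral_ofReal_eq measurableSet_Iic (gumg_integrableOn_Iic one_pos a) (gumg_nonneg 1),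
    gumg_integral_Iic one_pos a]
  unfold gumG
  norm_num

instance stdGumbel_prob : IsProbabilityMeasure stdGumbel := by
  constructor
  rw [stdGumbel_apply MeasurableSet.univ]
  rw [Measure.restrict_univ]
  rw [← ofReal_integral_eq_lintegral_ofReal (gumg_integrable one_pos)
    (Filter.Eventually.of_forall (gumg_nonneg 1)), gumg_integral one_pos]
  norm_num

lemma stdGumbel_Iio (a : ℝ) : stdGumbel (Iio a) = ENNReal.ofReal (Real.exp (-Real.exp (-a))) := by
  have h0 : stdGumbel {a} = 0 := by
    apply (withDensity_absolutelyContinuous _ _)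
    exact measure_singleton a
  rw [← stdGumbel_Iic a]
  apply le_antisymm (measure_mono Iio_subset_Iic_self)
  calc stdGumbel (Iic a) ≤ stdGumbel (Iio a ∪ {a}) := by
        apply measure_mono
        intro x hx
        have hx' : x ≤ a := hx
        rcases lt_or_eq_of_le hx' with h | h
        · exact Or.inl h
        · exact Or.inr h
    _ ≤ stdGumbel (Iio a) + stdGumbel {a} := measure_union_le _ _
    _ = stdGumbel (Iio a) := by rw [h0, add_zero]

open ProbabilityTheory in
lemma map_eq_pi {Ω : Type*} [MeasurableSpace Ω] (Pr : Measure Ω) [IsProbabilityMeasure Pr]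
    {K : ℕ} (ε : Fin K → Ω → ℝ) (hmeas : ∀ i, Measurable (ε i))
    (hindep : iIndepFun ε Pr)
    (hlaw : ∀ i, Measure.map (ε i) Pr = stdGumbel) :
    Measure.map (fun ω i => ε i ω) Pr = Measure.pi (fun _ => stdGumbel) := by
  symm; apply Measure.pi_eq
  intro s hs
  rw [Measure.map_apply (measurable_pi_lambda _ hmeas) (MeasurableSet.univ_pi hs)]
  have hpre : (fun ω i => ε i ω) ⁻¹' (Set.pi univ s) = ⋂ i ∈ Finset.univ, ε i ⁻¹' s i := by
    ext ω; simp [Set.mem_pi]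
  rw [hpre, hindep.measure_inter_preimage_eq_mul Finset.univ (fun i _ => hs i)]
  apply Finset.prod_congr rfl
  intro i _
  rw [← hlaw i, Measure.map_apply (hmeas i) (hs i)]

lemma pi_gumbel_eval {n : ℕ} (V : Fin (n + 1) → ℝ) (k : Fin (n + 1)) :
    Measure.pi (fun _ : Fin (n + 1) => stdGumbel) {x | ∀ j, j ≠ k → V k + x k > V j + x j}
      = ENNReal.ofReal (Real.exp (V k) / ∑ j, Real.exp (V j)) := by
  classical
  set e := MeasurableEquiv.piFinSuccAbove (fun _ : Fin (n + 1) => ℝ) k with he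
  have hmp := measurePreserving_piFinSuccAbove (fun _ : Fin (n + 1) => stdGumbel) k
  set T : Set (ℝ × (Fin n → ℝ)) :=
    {q | ∀ j : Fin n, q.2 j < q.1 + (V k - V (k.succAbove j))} with hTdef
  have hT : MeasurableSet T := by
    have : T = ⋂ j : Fin n, {q : ℝ × (Fin n → ℝ) | q.2 j < q.1 + (V k - V (k.succAbove j))} := by
      ext q; simp [hTdef]
    rw [this]
    exact MeasurableSet.iInter fun j => measurableSet_lt (by fun_prop) (by fun_prop)
  have hpre : ⇑e ⁻¹' T = {x : Fin (n + 1) → ℝ | ∀ j, j ≠ k → V k + x k > V j + x j} := by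
    ext x
    simp only [Set.mem_preimage, hTdef, Set.mem_setOf_eq, he,
      MeasurableEquiv.piFinSuccAbove_apply]
    constructor
    · intro h j hj
      rcases Fin.exists_succAbove_eq hj with ⟨j', rfl⟩
      have := h j'
      simp only [Fin.insertNthEquiv, Equiv.symm] at this ⊢
      have h2 : x (k.succAbove j') < x k + (V k - V (k.succAbove j')) := this
      linarith
    · intro h j
      have h2 := h (k.succAbove j) (Fin.succAbove_ne k j)
      show x (k.succAbove j) < x k + (V k - V (k.succAbove j))
      linarith
  rw [← hpre, ← Measure.map_apply e.measurable hT, hmp.map_eq]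
  set A : ℝ := ∑ j : Fin n, Real.exp (V (k.succAbove j) - V k) with hA
  have hA0 : 0 ≤ A := Finset.sum_nonneg fun j _ => (Real.exp_pos _).le
  have slice : ∀ t : ℝ,
      (Measure.pi fun _ : Fin n => stdGumbel) (Prod.mk t ⁻¹' T)
        = ENNReal.ofReal (Real.exp (-(A * Real.exp (-t)))) := by
    intro t
    have hset : Prod.mk t ⁻¹' T
        = Set.pi (univ : Set (Fin n)) (fun j => Iio (t + (V k - V (k.succAbove j)))) := by
      ext b; simp [hTdef]
    rw [hset, Measure.pi_pi]
    have hterm : ∀ j : Fin n, stdGumbel (Iio (t + (V k - V (k.succAbove j))))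
        = ENNReal.ofReal (Real.exp (-(Real.exp (V (k.succAbove j) - V k) * Real.exp (-t)))) := by
      intro j
      rw [stdGumbel_Iio]
      congr 2
      rw [← Real.exp_add]
      ring_nf
    rw [Finset.prod_congr rfl fun j _ => hterm j,
      ← ENNReal.ofReal_prod_of_nonneg (fun j _ => (Real.exp_pos _).le), ← Real.exp_sum]
    congr 2
    rw [hA, Finset.sum_mul, ← Finset.sum_neg_distrib]
  rw [Measure.prod_apply hT]
  rw [lintegral_congr fun t => slice t]
  -- compute the lintegral against stdGumbel
  have hFmeas : Measurable fun t : ℝ => ENNReal.ofReal (Real.exp (-(A * Real.exp (-t)))) := by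
    fun_prop
  have hgmeas : Measurable fun x : ℝ =>
      ENNReal.ofReal (Real.exp (-x) * Real.exp (-Real.exp (-x))) := by fun_prop
  rw [stdGumbel, lintegral_withDensity_eq_lintegral_mul _ hgmeas hFmeas]
  have hcomb : ∀ x : ℝ, (ENNReal.ofReal (Real.exp (-x) * Real.exp (-Real.exp (-x)))
      * ENNReal.ofReal (Real.exp (-(A * Real.exp (-x))))) = ENNReal.ofReal (gumg (A + 1) x) := by
    intro x
    rw [← ENNReal.ofReal_mul (by positivity)]
    congr 1
    unfold gumg
    rw [mul_assoc, ← Real.exp_add, ← Real.exp_add, ← Real.exp_add]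
    congr 1
    ring
  simp only [Pi.mul_apply]
  rw [lintegral_congr fun x => hcomb x]
  have hA1 : (0:ℝ) < A + 1 := by linarith
  rw [← ofReal_integral_eq_lintegral_ofReal (gumg_integrable hA1)
    (Filter.Eventually.of_forall (gumg_nonneg _)), gumg_integral hA1]
  -- final arithmetic
  congr 1
  have hsum : A + 1 = ∑ j : Fin (n + 1), Real.exp (V j - V k) := by
    rw [Fin.sum_univ_succAbove (fun j => Real.exp (V j - V k)) k, hA]
    simp [add_comm]
  rw [hsum]
  have hstep : ∑ j : Fin (n + 1), Real.exp (V j - V k)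
      = (∑ j : Fin (n + 1), Real.exp (V j)) / Real.exp (V k) := by
    rw [Finset.sum_div]
    exact Finset.sum_congr rfl fun j _ => Real.exp_sub _ _
  rw [hstep, inv_div]

end Helpers

open Set in
/-- **Proposition 1.** If `ε 1, …, ε K` are independent standard Gumbel random variables
and `V 1, …, V K` are real numbers, then the probability that alternative `k` attains the
strictly largest utility `V j + ε j` equals the softmax probability
`exp (V k) / ∑ j, exp (V j)`. -/
theorem choice_probability_softmax_of_gumbel
    {Ω : Type*} [MeasurableSpace Ω] (Pr : Measure Ω) [IsProbabilityMeasure Pr]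
    (K : ℕ) (hK : 2 ≤ K) (V : Fin K → ℝ) (ε : Fin K → Ω → ℝ)
    (hmeas : ∀ i, Measurable (ε i))
    (hindep : iIndepFun ε Pr)
    (hlaw : ∀ i, Measure.map (ε i) Pr = stdGumbel)
    (k : Fin K) :
    Pr {ω | ∀ j, j ≠ k → V k + ε k ω > V j + ε j ω}
      = ENNReal.ofReal (Real.exp (V k) / ∑ j, Real.exp (V j)) := by
  obtain ⟨n, rfl⟩ : ∃ n, K = n + 1 := ⟨K - 1, by omega⟩
  have hS : MeasurableSet {x : Fin (n + 1) → ℝ | ∀ j, j ≠ k → V k + x k > V j + x j} := by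
    have : {x : Fin (n + 1) → ℝ | ∀ j, j ≠ k → V k + x k > V j + x j}
        = ⋂ j, ⋂ (_ : j ≠ k), {x : Fin (n + 1) → ℝ | V j + x j < V k + x k} := by
      ext x; simp [Set.mem_iInter]
    rw [this]
    exact MeasurableSet.iInter fun j => MeasurableSet.iInter fun _ =>
      measurableSet_lt (by fun_prop) (by fun_prop)
  have hmap := map_eq_pi Pr ε hmeas hindep hlaw
  have hpre : (fun ω i => ε i ω) ⁻¹' {x : Fin (n + 1) → ℝ | ∀ j, j ≠ k → V k + x k > V j + x j}
      = {ω | ∀ j, j ≠ k → V k + ε k ω > V j + ε j ω} := rfl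
  rw [← hpre, ← Measure.map_apply (measurable_pi_lambda _ hmeas) hS, hmap,
    pi_gumbel_eval V k]
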